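/- Let α, γ, δ, q, ε ∈ ℂ with ε ≠ 0 and α/ε = −N for a nonnegative integer N, γ not a nonpositive integer. Suppose the coefficients a_0, …, a_N (with a_0 = 1) satisfy the recurrence R_n a_n + Q_{n−1}a_{n−1} + P_{n−2}a_{n−2} = 0 for 1 ≤ n ≤ N and additionally Q_N a_N + P_{N−1}a_{N−1} = 0, where R_n = −n(γ+n−1), Q_n = n(γ+n−1) − q, P_n = −δ(α+εn)/(γ+n). Then u(z) = Σ_{n=0}^{N} a_n · ₁F₁(−N+n; γ+n; −εz) is a polynomial in z of degree at most N and satisfies z²u'' + (εz² + γz + δ)u' + (αz − q)u = 0. -/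

import Mathlib

open PowerSeries

/-- Pochhammer symbol `(a)_k = a (a+1) ⋯ (a+k−1)` in `ℂ`. -/
noncomputable def poch (a : ℂ) (k : ℕ) : ℂ := (ascPochhammer ℂ k).eval a

/-- Kummer confluent hypergeometric series `₁F₁(a;b;sz)` as a formal power series in `z`. -/
noncomputable def F1 (a b s : ℂ) : PowerSeries ℂ :=
  PowerSeries.mk fun k => poch a k / poch b k * s ^ k / (k.factorial : ℂ)

/-- Formal derivative of a power series. -/
noncomputable def D (f : PowerSeries ℂ) : PowerSeries ℂ := f.derivativeFun

/-- The double-confluent Heun operator multiplied by `z²`. -/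
noncomputable def L (α γ δ q ε : ℂ) (f : PowerSeries ℂ) : PowerSeries ℂ :=
  (X : PowerSeries ℂ) ^ 2 * D (D f)
    + (PowerSeries.C ε * X ^ 2 + PowerSeries.C γ * X + PowerSeries.C δ) * D f
    + (PowerSeries.C α * X - PowerSeries.C q) * f

lemma poch_zero (a : ℂ) : poch a 0 = 1 := by simp [poch]

lemma poch_succ (a : ℂ) (k : ℕ) : poch a (k+1) = poch a k * (a + k) :=
  ascPochhammer_succ_eval k a

lemma poch_succ_left (a : ℂ) (k : ℕ) : poch a (k+1) = a * poch (a+1) k := by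
  simp [poch, ascPochhammer_succ_left, Polynomial.eval_comp]

lemma poch_ne_zero {γ : ℂ} (hγ : ∀ k : ℕ, γ + k ≠ 0) (n k : ℕ) : poch (γ + n) k ≠ 0 := by
  induction k with
  | zero => simp [poch]
  | succ k ih =>
    rw [poch_succ]
    refine mul_ne_zero ih ?_
    have := hγ (n + k)
    push_cast at this
    rw [add_assoc]
    exact this

lemma poch_neg_nat (m k : ℕ) (h : m < k) : poch (-(m:ℂ)) k = 0 := by
  induction k with
  | zero => omega
  | succ k ih =>
    rw [poch_succ]
    rcases Nat.lt_succ_iff_lt_or_eq.mp h with h | h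
    · rw [ih h, zero_mul]
    · subst h; simp

lemma coeff_F1 (a b s : ℂ) (k : ℕ) :
    PowerSeries.coeff k (F1 a b s) = poch a k / poch b k * s ^ k / (k.factorial : ℂ) := by
  simp [F1]

lemma coeff_D (f : PowerSeries ℂ) (k : ℕ) :
    PowerSeries.coeff k (D f) = PowerSeries.coeff (k+1) f * (k+1) :=
  PowerSeries.coeff_derivativeFun f k

lemma D_add (f g : PowerSeries ℂ) : D (f + g) = D f + D g := PowerSeries.derivativeFun_add f g

lemma D_zero : D (0 : PowerSeries ℂ) = 0 := by
  ext k; simp [coeff_D]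

lemma D_C_mul (c : ℂ) (f : PowerSeries ℂ) : D (PowerSeries.C c * f) = PowerSeries.C c * D f := by
  ext k; simp [coeff_D, PowerSeries.coeff_C_mul]; ring

lemma L_add (α γ δ q ε : ℂ) (f g : PowerSeries ℂ) :
    L α γ δ q ε (f + g) = L α γ δ q ε f + L α γ δ q ε g := by
  simp only [L, D_add]; ring

lemma L_zero (α γ δ q ε : ℂ) : L α γ δ q ε 0 = 0 := by
  simp [L, D_zero]

lemma L_C_mul (α γ δ q ε c : ℂ) (f : PowerSeries ℂ) :
    L α γ δ q ε (PowerSeries.C c * f) = PowerSeries.C c * L α γ δ q ε f := by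
  simp only [L, D_C_mul]; ring

lemma L_sum (α γ δ q ε : ℂ) (s : Finset ℕ) (b : ℕ → ℂ) (v : ℕ → PowerSeries ℂ) :
    L α γ δ q ε (∑ n ∈ s, PowerSeries.C (b n) * v n)
      = ∑ n ∈ s, PowerSeries.C (b n) * L α γ δ q ε (v n) := by
  classical
  induction s using Finset.induction_on with
  | empty => simp [L_zero]
  | insert _ _ h ih => rw [Finset.sum_insert h, Finset.sum_insert h, L_add, L_C_mul, ih]

lemma coeff_L_zero (α γ δ q ε : ℂ) (f : PowerSeries ℂ) :
    PowerSeries.coeff 0 (L α γ δ q ε f)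
      = δ * PowerSeries.coeff 1 f - q * PowerSeries.coeff 0 f := by
  have h0 : (PowerSeries.constantCoeff) (D f) = PowerSeries.coeff 1 f := by
    simpa using coeff_D f 0
  simp [L, add_mul, sub_mul, mul_assoc, PowerSeries.coeff_X_pow_mul',
    PowerSeries.coeff_C_mul, coeff_D, PowerSeries.coeff_zero_X_mul, h0]
  ring

lemma coeff_L_succ (α γ δ q ε : ℂ) (f : PowerSeries ℂ) (k : ℕ) :
    PowerSeries.coeff (k+1) (L α γ δ q ε f)
      = ((k:ℂ)*(k+1) + γ*(k+1) - q) * PowerSeries.coeff (k+1) f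
        + δ*((k:ℂ)+2) * PowerSeries.coeff (k+2) f
        + (ε*(k:ℂ) + α) * PowerSeries.coeff k f := by
  cases k with
  | zero =>
    simp [L, add_mul, sub_mul, mul_assoc, PowerSeries.coeff_X_pow_mul',
      PowerSeries.coeff_C_mul, coeff_D, PowerSeries.coeff_succ_X_mul]
    ring
  | succ j =>
    have h2 : j + 2 = j + 2 := rfl
    simp [L, add_mul, sub_mul, mul_assoc, PowerSeries.coeff_X_pow_mul',
      PowerSeries.coeff_C_mul, coeff_D, PowerSeries.coeff_succ_X_mul,
      show (2:ℕ) ≤ j + 1 + 1 by omega, Nat.succ_sub_one]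
    ring


lemma poch_one (a : ℂ) : poch a 1 = a := by
  have := poch_succ a 0; simpa [poch_zero] using this

lemma fact_cast_succ (k : ℕ) : (((k+1).factorial : ℕ) : ℂ) = ((k:ℂ)+1) * (k.factorial : ℂ) := by
  rw [Nat.factorial_succ]; push_cast; ring

lemma fact_ne_zero' (k : ℕ) : ((k.factorial : ℕ) : ℂ) ≠ 0 :=
  Nat.cast_ne_zero.mpr k.factorial_ne_zero

lemma kcast_succ_ne_zero (k : ℕ) : ((k:ℂ)+1) ≠ 0 := Nat.cast_add_one_ne_zero k

lemma keyA (x c s : ℂ) (k : ℕ) (hck : c + k ≠ 0) (hB : poch c k ≠ 0) :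
    ((k:ℂ)+1) * (c + k) * (poch x (k+1) / poch c (k+1) * s^(k+1) / (((k+1).factorial : ℕ) : ℂ))
      = s * (x + k) * (poch x k / poch c k * s^k / ((k.factorial : ℕ) : ℂ)) := by
  rw [poch_succ x k, poch_succ c k, fact_cast_succ]
  have hfk := fact_ne_zero' k
  have hk1 := kcast_succ_ne_zero k
  field_simp
  ring

lemma keyB (x c s : ℂ) (k : ℕ) (hc1 : c - 1 ≠ 0) (hck : c + k ≠ 0) (hB : poch c k ≠ 0) :
    ((k:ℂ)+1) * (poch x (k+1) / poch c (k+1) * s^(k+1) / (((k+1).factorial : ℕ) : ℂ))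
        - s * (poch x k / poch c k * s^k / ((k.factorial : ℕ) : ℂ))
      = (c-1) * (poch (x-1) (k+1) / poch (c-1) (k+1) * s^(k+1) / (((k+1).factorial : ℕ) : ℂ)
        - poch x (k+1) / poch c (k+1) * s^(k+1) / (((k+1).factorial : ℕ) : ℂ)) := by
  have h5 : poch (x-1) (k+1) = (x-1) * poch x k := by
    have := poch_succ_left (x-1) k; rw [sub_add_cancel] at this; exact this
  have h6 : poch (c-1) (k+1) = (c-1) * poch c k := by
    have := poch_succ_left (c-1) k; rw [sub_add_cancel] at this; exact this
  rw [poch_succ x k, poch_succ c k, h5, h6, fact_cast_succ]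
  have hfk := fact_ne_zero' k
  have hk1 := kcast_succ_ne_zero k
  field_simp
  ring

lemma keyC (x c s : ℂ) (k : ℕ) (hc : c ≠ 0) (hBp : poch (c+1) (k+1) ≠ 0) :
    ((k:ℂ)+2) * (poch x (k+2) / poch c (k+2) * s^(k+2) / (((k+2).factorial : ℕ) : ℂ))
      = (s * x / c) * (poch (x+1) (k+1) / poch (c+1) (k+1) * s^(k+1) / (((k+1).factorial : ℕ) : ℂ)) := by
  rw [poch_succ_left x (k+1), poch_succ_left c (k+1),
    show k+2 = (k+1)+1 from rfl, fact_cast_succ (k+1)]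
  have hfk := fact_ne_zero' (k+1)
  have hk2 : ((k:ℂ)+1+1) ≠ 0 := by
    have := kcast_succ_ne_zero (k+1); push_cast at this; exact this
  push_cast
  field_simp
  ring


set_option maxHeartbeats 1000000 in
lemma LFn (α γ δ q ε : ℂ) (N : ℕ) (hα : α = -(ε * N)) (hγ : ∀ k : ℕ, γ + k ≠ 0) (n : ℕ) :
    L α γ δ q ε (F1 (-(N:ℂ) + n) (γ + n) (-ε)) =
      PowerSeries.C (-(n:ℂ) * (γ + n - 1)) * F1 (-(N:ℂ) + ((n-1:ℕ):ℂ)) (γ + ((n-1:ℕ):ℂ)) (-ε)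
      + PowerSeries.C ((n:ℂ) * (γ + n - 1) - q) * F1 (-(N:ℂ) + n) (γ + n) (-ε)
      + PowerSeries.C (-δ * (α + ε * n) / (γ + n)) * F1 (-(N:ℂ) + ((n+1:ℕ):ℂ)) (γ + ((n+1:ℕ):ℂ)) (-ε) := by
  have hc : γ + (n:ℂ) ≠ 0 := hγ n
  ext K
  cases K with
  | zero =>
    rw [coeff_L_zero]
    simp only [map_add, PowerSeries.coeff_C_mul, coeff_F1]
    simp only [poch_zero, poch_one, pow_zero, pow_one, Nat.factorial_zero, Nat.factorial_one,
      Nat.cast_one, div_one, mul_one, one_div]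
    rw [hα]
    cases n with
    | zero =>
      norm_num
      field_simp
      ring
    | succ m =>
      have hcm : γ + ((m+1:ℕ):ℂ) ≠ 0 := hγ (m+1)
      field_simp
      ring
  | succ k =>
    rw [coeff_L_succ]
    simp only [map_add, PowerSeries.coeff_C_mul, coeff_F1]
    cases n with
    | zero =>
      simp only [Nat.zero_sub, Nat.cast_zero, add_zero, neg_zero, zero_mul, zero_sub, zero_add,
        Nat.cast_one, mul_zero]
      rw [hα]
      have h00 : γ + ((0:ℕ):ℂ) = γ := by norm_num
      have hB : poch γ k ≠ 0 := by have := poch_ne_zero hγ 0 k; rwa [h00] at this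
      have hc' : (γ:ℂ) ≠ 0 := by have := hγ 0; rwa [h00] at this
      have hck : γ + (k:ℂ) ≠ 0 := hγ k
      have hBp : poch (γ+1) (k+1) ≠ 0 := by
        have := poch_ne_zero hγ 1 (k+1)
        rwa [show γ + ((1:ℕ):ℂ) = γ + 1 by norm_num] at this
      have EA := keyA (-(N:ℂ)) γ (-ε) k hck hB
      have EC := keyC (-(N:ℂ)) γ (-ε) k hc' hBp
      linear_combination δ * EC + EA
    | succ m =>
      have em : ((m+1-1:ℕ):ℂ) = ((m:ℕ):ℂ) := by norm_num
      rw [em, hα]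
      set x : ℂ := -(N:ℂ) + ((m+1:ℕ):ℂ) with hxdef
      set c : ℂ := γ + ((m+1:ℕ):ℂ) with hcdef
      rw [show -(N:ℂ) + ((m:ℕ):ℂ) = x - 1 by rw [hxdef]; push_cast; ring,
          show γ + ((m:ℕ):ℂ) = c - 1 by rw [hcdef]; push_cast; ring,
          show -(N:ℂ) + ((m+1+1:ℕ):ℂ) = x + 1 by rw [hxdef]; push_cast; ring,
          show γ + ((m+1+1:ℕ):ℂ) = c + 1 by rw [hcdef]; push_cast; ring]
      have hN : ((N:ℕ):ℂ) = ((m+1:ℕ):ℂ) - x := by rw [hxdef]; ring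
      have hγ' : γ = c - ((m+1:ℕ):ℂ) := by rw [hcdef]; ring
      have hB : poch c k ≠ 0 := poch_ne_zero hγ (m+1) k
      have hc' : c ≠ 0 := hγ (m+1)
      have hc1 : c - 1 ≠ 0 := by
        have := hγ m; rw [show γ + ((m:ℕ):ℂ) = c - 1 by rw [hcdef]; push_cast; ring] at this; exact this
      have hck : c + (k:ℂ) ≠ 0 := by
        have := hγ (m+1+k); rw [hcdef]; push_cast at this ⊢; intro hcon; exact this (by linear_combination hcon)
      have hBp : poch (c+1) (k+1) ≠ 0 := by
        have := poch_ne_zero hγ (m+2) (k+1)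
        rw [show γ + ((m+2:ℕ):ℂ) = c + 1 by rw [hcdef]; push_cast; ring] at this; exact this
      have EA := keyA x c (-ε) k hck hB
      have EB := keyB x c (-ε) k hc1 hck hB
      have EC := keyC x c (-ε) k hc' hBp
      rw [hN, hγ']
      linear_combination δ * EC + EA - ((m+1:ℕ):ℂ) * EB

set_option maxHeartbeats 1000000 in
/-- Two-sided termination: `u = Σ_{n=0}^{N} a_n ₁F₁(−N+n; γ+n; −εz)` is a polynomial
solution of degree at most `N` of the double-confluent Heun equation. -/
theorem stmt_15 (α γ δ q ε : ℂ) (hε : ε ≠ 0) (N : ℕ) (hα : α / ε = -(N : ℂ))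
    (hγ : ∀ k : ℕ, γ + k ≠ 0)
    (R Q P : ℕ → ℂ)
    (hR : ∀ n : ℕ, R n = -(n : ℂ) * (γ + n - 1))
    (hQ : ∀ n : ℕ, Q n = (n : ℂ) * (γ + n - 1) - q)
    (hP : ∀ n : ℕ, P n = -δ * (α + ε * n) / (γ + n))
    (a : ℕ → ℂ) (ha0 : a 0 = 1)
    (hrec1 : 1 ≤ N → R 1 * a 1 + Q 0 * a 0 = 0)
    (hrec : ∀ n : ℕ, 2 ≤ n → n ≤ N →
      R n * a n + Q (n - 1) * a (n - 1) + P (n - 2) * a (n - 2) = 0)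
    (hterm : Q N * a N + (if N = 0 then 0 else P (N - 1) * a (N - 1)) = 0) :
    L α γ δ q ε (∑ n ∈ Finset.range (N + 1),
        PowerSeries.C (a n) * F1 (-(N : ℂ) + n) (γ + n) (-ε)) = 0 ∧
      ∀ k : ℕ, N < k →
        PowerSeries.coeff k (∑ n ∈ Finset.range (N + 1),
          PowerSeries.C (a n) * F1 (-(N : ℂ) + n) (γ + n) (-ε)) = 0 := by
  have hα' : α = -(ε * N) := by
    field_simp at hα; linear_combination hα
  set Fn : ℕ → PowerSeries ℂ := fun m => F1 (-(N:ℂ) + m) (γ + m) (-ε) with hFn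
  constructor
  · rw [L_sum]
    have hLn : ∀ n : ℕ, L α γ δ q ε (Fn n)
        = PowerSeries.C (R n) * Fn (n-1) + PowerSeries.C (Q n) * Fn n
          + PowerSeries.C (P n) * Fn (n+1) := by
      intro n
      rw [hR n, hQ n, hP n, hFn]
      simpa using LFn α γ δ q ε N hα' hγ n
    change ∑ n ∈ Finset.range (N + 1), PowerSeries.C (a n) * L α γ δ q ε (Fn n) = 0
    simp only [hLn, mul_add]
    rw [Finset.sum_add_distrib, Finset.sum_add_distrib]
    rw [Finset.sum_range_succ'
      (fun n => PowerSeries.C (a n) * (PowerSeries.C (R n) * Fn (n-1))) N]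
    rw [Finset.sum_range_succ
      (fun n => PowerSeries.C (a n) * (PowerSeries.C (Q n) * Fn n)) N]
    rw [Finset.sum_range_succ
      (fun n => PowerSeries.C (a n) * (PowerSeries.C (P n) * Fn (n+1))) N]
    simp only [Nat.add_sub_cancel, Nat.zero_sub]
    have hR0 : R 0 = 0 := by rw [hR]; simp
    have hPN : P N = 0 := by rw [hP, hα']; simp
    have hz0 : PowerSeries.C (a 0) * (PowerSeries.C (R 0) * Fn 0) = 0 := by
      rw [hR0]; simp
    have htP : PowerSeries.C (a N) * (PowerSeries.C (P N) * Fn (N+1)) = 0 := by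
      rw [hPN]; simp
    set g : ℕ → PowerSeries ℂ := fun m =>
      if m = 0 then 0 else PowerSeries.C (a (m-1)) * (PowerSeries.C (P (m-1)) * Fn m)
      with hg
    have hg0 : g 0 = 0 := by simp [hg]
    have key : ∀ i ∈ Finset.range N,
        PowerSeries.C (a (i+1)) * (PowerSeries.C (R (i+1)) * Fn i)
        + PowerSeries.C (a i) * (PowerSeries.C (Q i) * Fn i)
        + PowerSeries.C (a i) * (PowerSeries.C (P i) * Fn (i+1))
        = g (i+1) - g i := by
      intro i hi
      rw [Finset.mem_range] at hi
      have hgsucc : g (i+1) = PowerSeries.C (a i) * (PowerSeries.C (P i) * Fn (i+1)) := by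
        simp [hg]
      cases i with
      | zero =>
        rw [hgsucc, hg0]
        have h := hrec1 (by omega)
        have hC : PowerSeries.C (R 1 * a 1 + Q 0 * a 0) = 0 := by rw [h]; simp
        rw [map_add, map_mul, map_mul] at hC
        linear_combination Fn 0 * hC
      | succ j =>
        have hgj : g (j+1) = PowerSeries.C (a j) * (PowerSeries.C (P j) * Fn (j+1)) := by
          simp [hg]
        rw [hgsucc, hgj]
        have h : R (j+2) * a (j+2) + Q (j+1) * a (j+1) + P j * a j = 0 :=
          hrec (j+2) (by omega) (by omega)
        have hC : PowerSeries.C (R (j+2) * a (j+2) + Q (j+1) * a (j+1) + P j * a j) = 0 := by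
          rw [h]; simp
        rw [map_add, map_add, map_mul, map_mul, map_mul] at hC
        linear_combination Fn (j+1) * hC
    have main : (∑ i ∈ Finset.range N,
          PowerSeries.C (a (i+1)) * (PowerSeries.C (R (i+1)) * Fn i))
        + (∑ i ∈ Finset.range N, PowerSeries.C (a i) * (PowerSeries.C (Q i) * Fn i))
        + (∑ i ∈ Finset.range N, PowerSeries.C (a i) * (PowerSeries.C (P i) * Fn (i+1)))
        = g N - g 0 := by
      rw [← Finset.sum_add_distrib, ← Finset.sum_add_distrib, Finset.sum_congr rfl key]
      exact Finset.sum_range_sub g N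
    have hfinal : g N + PowerSeries.C (a N) * (PowerSeries.C (Q N) * Fn N) = 0 := by
      cases N with
      | zero =>
        rw [hg0]
        have h : Q 0 * a 0 = 0 := by simpa using hterm
        have hC : PowerSeries.C (Q 0 * a 0) = 0 := by rw [h]; simp
        rw [map_mul] at hC
        linear_combination Fn 0 * hC
      | succ M =>
        have hgM : g (M+1) = PowerSeries.C (a M) * (PowerSeries.C (P M) * Fn (M+1)) := by
          simp [hg]
        rw [hgM]
        have h : Q (M+1) * a (M+1) + P M * a M = 0 := by simpa using hterm
        have hC : PowerSeries.C (Q (M+1) * a (M+1) + P M * a M) = 0 := by rw [h]; simp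
        rw [map_add, map_mul, map_mul] at hC
        linear_combination Fn (M+1) * hC
    linear_combination main + hz0 + htP + hfinal - hg0
  · intro k hk
    rw [map_sum]
    apply Finset.sum_eq_zero
    intro n hn
    rw [Finset.mem_range] at hn
    rw [PowerSeries.coeff_C_mul, coeff_F1]
    have h1 : -(N:ℂ) + n = -(((N-n:ℕ)):ℂ) := by
      push_cast [Nat.cast_sub (by omega : n ≤ N)]; ring
    rw [h1, poch_neg_nat (N-n) k (by omega)]
    simp
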